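/- Let G be a torsion-free group, let K be a nontrivial subgroup of G, and let H ≤ K be maximal amenable in K. Suppose that for every g ∈ G with g ∉ K, the group homomorphism from the free product K * ℤ to G which restricts to the inclusion of K and sends a generator of ℤ to g is injective. Then H is a maximal amenable subgroup of G. -/

import Mathlib

open Function Set Filter Bornology Topology Pointwise

noncomputable section

/-- A left-invariant mean on the bounded real-valued functions on `G` exists:
`G` is amenable. -/
def IsAmenable (G : Type*) [Group G] : Prop :=
  ∃ m : (G → ℝ) → ℝ,
    (∀ f₁ f₂ : G → ℝ, Bornology.IsBounded (Set.range f₁) → Bornology.IsBounded (Set.range f₂) →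
      m (f₁ + f₂) = m f₁ + m f₂) ∧
    (∀ (c : ℝ) (f : G → ℝ), Bornology.IsBounded (Set.range f) → m (c • f) = c * m f) ∧
    (∀ f : G → ℝ, Bornology.IsBounded (Set.range f) → (∀ x, 0 ≤ f x) → 0 ≤ m f) ∧
    m (fun _ => 1) = 1 ∧
    (∀ (g : G) (f : G → ℝ), Bornology.IsBounded (Set.range f) →
      m (fun x => f (g * x)) = m f)

/-- `H` is a maximal amenable subgroup of `G`. -/
def MaximalAmenable {G : Type*} [Group G] (H : Subgroup G) : Prop :=
  IsAmenable H ∧ ∀ K : Subgroup G, IsAmenable K → H ≤ K → K = H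

/-- Old Mathlib `Monoid.IsTorsionFree`: no nontrivial element of finite order. -/
def Monoid.IsTorsionFree (G : Type*) [Monoid G] : Prop :=
  ∀ g : G, g ≠ 1 → ¬IsOfFinOrder g


theorem isAmenable_of_injective {Γ Δ : Type*} [Group Γ] [Group Δ] (e : Γ →* Δ)
    (he : Function.Injective e) (hΔ : IsAmenable Δ) : IsAmenable Γ := by
  classical
  obtain ⟨m, hadd, hsmul, hpos, hone, hinv⟩ := hΔ
  let r : Setoid Δ :=
    { r := fun x y => ∃ γ : Γ, x = e γ * y
      iseqv := ⟨fun x => ⟨1, by simp⟩,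
        fun {x y} h => by
          obtain ⟨γ, h⟩ := h
          exact ⟨γ⁻¹, by rw [h, map_inv]; group⟩,
        fun {x y z} h h' => by
          obtain ⟨γ, h⟩ := h; obtain ⟨δ, h'⟩ := h'
          exact ⟨γ * δ, by rw [h, h', map_mul, mul_assoc]⟩⟩ }
  let q : Δ → Δ := fun x => (Quotient.mk r x).out
  have hq : ∀ x, ∃ γ : Γ, x = e γ * q x := by
    intro x
    have h1 : r.r (q x) x := Quotient.exact (Quotient.out_eq (Quotient.mk r x))
    exact r.iseqv.symm h1
  let μ : Δ → Γ := fun x => (hq x).choose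
  have hμ : ∀ x, e (μ x) * q x = x := fun x => ((hq x).choose_spec).symm
  have hqe : ∀ (γ : Γ) (x : Δ), q (e γ * x) = q x := by
    intro γ x
    have : Quotient.mk r (e γ * x) = Quotient.mk r x := Quotient.sound ⟨γ, rfl⟩
    simp only [q, this]
  have hμe : ∀ (γ : Γ) (x : Δ), μ (e γ * x) = γ * μ x := by
    intro γ x
    apply he
    have h1 : e (μ (e γ * x)) * q x = e γ * x := by rw [← hqe γ x]; exact hμ _
    have h2 : e (γ * μ x) * q x = e γ * x := by rw [map_mul, mul_assoc, hμ]
    exact mul_right_cancel (h1.trans h2.symm)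
  refine ⟨fun f => m (f ∘ μ), ?_, ?_, ?_, ?_, ?_⟩
  · intro f₁ f₂ h₁ h₂
    dsimp only
    have : (f₁ + f₂) ∘ μ = f₁ ∘ μ + f₂ ∘ μ := rfl
    rw [this]
    exact hadd _ _ (h₁.subset (Set.range_comp_subset_range _ _))
      (h₂.subset (Set.range_comp_subset_range _ _))
  · intro c f hf
    dsimp only
    have : (c • f) ∘ μ = c • (f ∘ μ) := rfl
    rw [this]
    exact hsmul c _ (hf.subset (Set.range_comp_subset_range _ _))
  · intro f hf hf0
    exact hpos _ (hf.subset (Set.range_comp_subset_range _ _)) (fun x => hf0 _)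
  · exact hone
  · intro γ f hf
    dsimp only
    have : (fun x => f (γ * x)) ∘ μ = fun y => (f ∘ μ) (e γ * y) := by
      funext y
      simp only [Function.comp_apply, hμe]
    rw [this]
    exact hinv (e γ) (f ∘ μ) (hf.subset (Set.range_comp_subset_range _ _))

private def avgZ (f : Multiplicative ℤ → ℝ) (n : ℕ) : ℝ :=
  (∑ k ∈ Finset.Icc (-(n:ℤ)) (n:ℤ), f (Multiplicative.ofAdd k)) / (2*(n:ℝ)+1)

private lemma bdd_exists {G : Type*} (f : G → ℝ) (hf : IsBounded (range f)) :
    ∃ C : ℝ, ∀ x, |f x| ≤ C := by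
  obtain ⟨C, hC⟩ := (isBounded_iff_forall_norm_le).mp hf
  exact ⟨C, fun x => hC _ (mem_range_self x)⟩

private lemma cardIcc (n : ℕ) : (Finset.Icc (-(n:ℤ)) (n:ℤ)).card = 2*n+1 := by
  rw [Int.card_Icc]; omega

private lemma avgZ_abs_le (f : Multiplicative ℤ → ℝ) (C : ℝ) (hC : ∀ x, |f x| ≤ C) (n : ℕ) :
    |avgZ f n| ≤ C := by
  have hd : (0:ℝ) < 2*(n:ℝ)+1 := by positivity
  rw [avgZ, abs_div, abs_of_pos hd, div_le_iff₀ hd]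
  calc |∑ k ∈ Finset.Icc (-(n:ℤ)) (n:ℤ), f (Multiplicative.ofAdd k)|
      ≤ ∑ k ∈ Finset.Icc (-(n:ℤ)) (n:ℤ), |f (Multiplicative.ofAdd k)| :=
        Finset.abs_sum_le_sum_abs _ _
    _ ≤ (Finset.Icc (-(n:ℤ)) (n:ℤ)).card • C :=
        Finset.sum_le_card_nsmul _ _ C (fun x _ => hC _)
    _ = C * (2*(n:ℝ)+1) := by rw [cardIcc, nsmul_eq_mul]; push_cast; ring

theorem isAmenable_multiplicative_int : IsAmenable (Multiplicative ℤ) := by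
  rw [IsAmenable]
  classical
  obtain ⟨U, hU⟩ := Ultrafilter.exists_le (atTop : Filter ℕ)
  have hlim : ∀ f : Multiplicative ℤ → ℝ, IsBounded (range f) →
      ∃ c, Tendsto (avgZ f) (↑U) (nhds c) := by
    intro f hf
    obtain ⟨C, hC⟩ := bdd_exists f hf
    have hmem : ∀ n, avgZ f n ∈ Set.Icc (-C) C := fun n => abs_le.mp (avgZ_abs_le f C hC n)
    have hle : (Ultrafilter.map (avgZ f) U : Filter ℝ) ≤ 𝓟 (Set.Icc (-C) C) := by
      rw [le_principal_iff]
      exact Filter.mem_map.mpr (by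
        have : (avgZ f) ⁻¹' (Set.Icc (-C) C) = Set.univ := by
          ext n; simp [hmem n]
        rw [this]; exact Filter.univ_mem)
    obtain ⟨c, -, hc⟩ := (isCompact_Icc (a := -C) (b := C)).ultrafilter_le_nhds
      (Ultrafilter.map (avgZ f) U) hle
    exact ⟨c, hc⟩
  set m : (Multiplicative ℤ → ℝ) → ℝ :=
    fun f => if h : IsBounded (range f) then (hlim f h).choose else 0 with hm_def
  have hm : ∀ (f : Multiplicative ℤ → ℝ), IsBounded (range f) → Tendsto (avgZ f) (↑U) (𝓝 (m f)) := by
    intro f hf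
    rw [hm_def]; dsimp only; rw [dif_pos hf]
    exact (hlim f hf).choose_spec
  have hadd : ∀ f₁ f₂, IsBounded (range f₁) → IsBounded (range f₂) →
      m (f₁ + f₂) = m f₁ + m f₂ := by
    intro f₁ f₂ h₁ h₂
    obtain ⟨C₁, hC₁⟩ := bdd_exists f₁ h₁
    obtain ⟨C₂, hC₂⟩ := bdd_exists f₂ h₂
    have hsum : IsBounded (range (f₁ + f₂)) := by
      rw [isBounded_iff_forall_norm_le]
      refine ⟨C₁ + C₂, ?_⟩
      rintro x ⟨y, rfl⟩
      calc ‖(f₁ + f₂) y‖ = |f₁ y + f₂ y| := rfl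
        _ ≤ |f₁ y| + |f₂ y| := abs_add_le _ _
        _ ≤ C₁ + C₂ := add_le_add (hC₁ y) (hC₂ y)
    have he : avgZ (f₁ + f₂) = avgZ f₁ + avgZ f₂ := by
      funext n
      simp only [avgZ, Pi.add_apply, Finset.sum_add_distrib, add_div]
    refine tendsto_nhds_unique (hm _ hsum) ?_
    rw [he]
    exact (hm f₁ h₁).add (hm f₂ h₂)
  have hsmul : ∀ (c : ℝ) f, IsBounded (range f) → m (c • f) = c * m f := by
    intro c f hf
    obtain ⟨C, hC⟩ := bdd_exists f hf
    have hcs : IsBounded (range (c • f)) := by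
      rw [isBounded_iff_forall_norm_le]
      refine ⟨|c| * C, ?_⟩
      rintro x ⟨y, rfl⟩
      calc ‖(c • f) y‖ = |c| * |f y| := by simp [abs_mul]
        _ ≤ |c| * C := by
            have := hC y
            have h0 : (0:ℝ) ≤ |c| := abs_nonneg c
            nlinarith [abs_nonneg (f y)]
    have he : avgZ (c • f) = fun n => c * avgZ f n := by
      funext n
      simp only [avgZ, Pi.smul_apply, smul_eq_mul, ← Finset.mul_sum, mul_div_assoc]
    refine tendsto_nhds_unique (hm _ hcs) ?_
    rw [he]
    exact (hm f hf).const_mul c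
  have hpos : ∀ f, IsBounded (range f) → (∀ x, 0 ≤ f x) → 0 ≤ m f := by
    intro f hf hf0
    refine ge_of_tendsto' (hm f hf) ?_
    intro n
    have : (0:ℝ) ≤ ∑ k ∈ Finset.Icc (-(n:ℤ)) (n:ℤ), f (Multiplicative.ofAdd k) :=
      Finset.sum_nonneg (fun k _ => hf0 _)
    have hd : (0:ℝ) < 2*(n:ℝ)+1 := by positivity
    exact div_nonneg this hd.le
  have hone : m (fun _ => 1) = 1 := by
    have hb : IsBounded (range (fun _ : Multiplicative ℤ => (1:ℝ))) := by
      rw [isBounded_iff_forall_norm_le]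
      exact ⟨1, by rintro x ⟨y, rfl⟩; simp⟩
    have he : avgZ (fun _ => 1) = fun _ => (1:ℝ) := by
      funext n
      have hd : (2*(n:ℝ)+1) ≠ 0 := by positivity
      simp only [avgZ, Finset.sum_const, cardIcc, nsmul_eq_mul, mul_one]
      rw [div_eq_one_iff_eq hd]
      push_cast; ring
    refine tendsto_nhds_unique (hm _ hb) ?_
    rw [he]
    exact tendsto_const_nhds
  refine ⟨m, hadd, hsmul, hpos, hone, ?_⟩
  -- invariance
  have hshift_bdd : ∀ (g : Multiplicative ℤ) (f : Multiplicative ℤ → ℝ), IsBounded (range f) →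
      IsBounded (range (fun x => f (g * x))) := by
    intro g f hf
    refine hf.subset ?_
    rintro x ⟨y, rfl⟩
    exact mem_range_self _
  have hgen : ∀ f, IsBounded (range f) →
      m (fun x => f (Multiplicative.ofAdd 1 * x)) = m f := by
    intro f hf
    obtain ⟨C, hC⟩ := bdd_exists f hf
    set sf : Multiplicative ℤ → ℝ := fun x => f (Multiplicative.ofAdd 1 * x) with hsf
    have hsb : IsBounded (range sf) := hshift_bdd _ f hf
    have key : ∀ n : ℕ, avgZ sf n =
        avgZ f n + (f (Multiplicative.ofAdd ((n:ℤ)+1)) - f (Multiplicative.ofAdd (-(n:ℤ)))) / (2*(n:ℝ)+1) := by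
      intro n
      have h1 : ∑ k ∈ Finset.Icc (-(n:ℤ)) (n:ℤ), sf (Multiplicative.ofAdd k)
          = ∑ k ∈ Finset.Icc (-(n:ℤ)+1) ((n:ℤ)+1), f (Multiplicative.ofAdd k) := by
        refine Finset.sum_bij' (fun k _ => k + 1) (fun k _ => k - 1) ?_ ?_ ?_ ?_ ?_
        · intro a ha; simp only [Finset.mem_Icc] at ha ⊢; omega
        · intro a ha; simp only [Finset.mem_Icc] at ha ⊢; omega
        · intro a ha; ring
        · intro a ha; ring
        · intro a ha
          simp only [hsf, ← ofAdd_add]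
          congr 1
          ring_nf
      have e1 : Finset.Icc (-(n:ℤ)+1) ((n:ℤ)+1)
          = insert ((n:ℤ)+1) (Finset.Icc (-(n:ℤ)+1) (n:ℤ)) := by
        ext k; simp only [Finset.mem_Icc, Finset.mem_insert]; omega
      have e2 : Finset.Icc (-(n:ℤ)) (n:ℤ)
          = insert (-(n:ℤ)) (Finset.Icc (-(n:ℤ)+1) (n:ℤ)) := by
        ext k; simp only [Finset.mem_Icc, Finset.mem_insert]; omega
      have hni1 : ((n:ℤ)+1) ∉ Finset.Icc (-(n:ℤ)+1) (n:ℤ) := by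
        simp only [Finset.mem_Icc]; omega
      have hni2 : (-(n:ℤ)) ∉ Finset.Icc (-(n:ℤ)+1) (n:ℤ) := by
        simp only [Finset.mem_Icc]; omega
      rw [avgZ, avgZ, h1, e1, Finset.sum_insert hni1, e2, Finset.sum_insert hni2]
      ring
    have hdiff : Tendsto (fun n : ℕ =>
        (f (Multiplicative.ofAdd ((n:ℤ)+1)) - f (Multiplicative.ofAdd (-(n:ℤ)))) / (2*(n:ℝ)+1))
        atTop (𝓝 0) := by
      refine squeeze_zero_norm (a := fun n : ℕ => (2*C)/(2*(n:ℝ)+1)) ?_ ?_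
      · intro n
        have hd : (0:ℝ) < 2*(n:ℝ)+1 := by positivity
        rw [norm_div, Real.norm_eq_abs, Real.norm_eq_abs, abs_of_pos hd, div_le_div_iff_of_pos_right hd]
        calc |f (Multiplicative.ofAdd ((n:ℤ)+1)) - f (Multiplicative.ofAdd (-(n:ℤ)))|
            ≤ |f (Multiplicative.ofAdd ((n:ℤ)+1))| + |f (Multiplicative.ofAdd (-(n:ℤ)))| := abs_sub _ _
          _ ≤ C + C := add_le_add (hC _) (hC _)
          _ = 2*C := by ring
      · apply Tendsto.div_atTop tendsto_const_nhds
        have h1 : Tendsto (fun n : ℕ => (n:ℝ)) atTop atTop := tendsto_natCast_atTop_atTop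
        have h2 : Tendsto (fun n : ℕ => 2*(n:ℝ)) atTop atTop :=
          h1.const_mul_atTop (by norm_num)
        exact tendsto_atTop_add_const_right _ 1 h2
    have hdiffU : Tendsto (fun n : ℕ =>
        (f (Multiplicative.ofAdd ((n:ℤ)+1)) - f (Multiplicative.ofAdd (-(n:ℤ)))) / (2*(n:ℝ)+1))
        (↑U) (𝓝 0) := hdiff.mono_left hU
    refine tendsto_nhds_unique (hm sf hsb) ?_
    have : Tendsto (fun n => avgZ f n +
        (f (Multiplicative.ofAdd ((n:ℤ)+1)) - f (Multiplicative.ofAdd (-(n:ℤ)))) / (2*(n:ℝ)+1))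
        (↑U) (𝓝 (m f + 0)) := (hm f hf).add hdiffU
    rw [add_zero] at this
    exact this.congr (fun n => (key n).symm)
  -- subgroup of invariance
  intro g f hf
  set InvSet : Set (Multiplicative ℤ) :=
    {g | ∀ f, IsBounded (range f) → m (fun x => f (g * x)) = m f} with hIS
  have h1 : Multiplicative.ofAdd (1:ℤ) ∈ InvSet := fun f hf => hgen f hf
  have hone' : (1 : Multiplicative ℤ) ∈ InvSet := by
    intro f hf; simp only [one_mul]
  have hmul : ∀ a b, a ∈ InvSet → b ∈ InvSet → a * b ∈ InvSet := by
    intro a b ha hb f hf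
    have h1 : m (fun x => f (a * b * x)) = m (fun x => (fun y => f (a * y)) (b * x)) := by
      congr 1; funext x; rw [mul_assoc]
    rw [h1, hb _ (hshift_bdd a f hf), ha f hf]
  have hinv : ∀ a, a ∈ InvSet → a⁻¹ ∈ InvSet := by
    intro a ha f hf
    have := ha (fun x => f (a⁻¹ * x)) (hshift_bdd a⁻¹ f hf)
    simp only [← mul_assoc, inv_mul_cancel, one_mul] at this
    exact this.symm
  have hpow : ∀ n : ℤ, (Multiplicative.ofAdd (1:ℤ))^n ∈ InvSet := by
    intro n
    induction n using Int.induction_on with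
    | zero => simpa using hone'
    | succ k ih => rw [zpow_add, zpow_one]; exact hmul _ _ ih h1
    | pred k ih => rw [zpow_sub, zpow_one]; exact hmul _ _ ih (hinv _ h1)
  have hg : g ∈ InvSet := by
    have : g = (Multiplicative.ofAdd (1:ℤ)) ^ (Multiplicative.toAdd g) := by
      rw [← ofAdd_zsmul, smul_eq_mul, mul_one, ofAdd_toAdd]
    rw [this]; exact hpow _
  exact hg f hf

private lemma reduced_no_cancel {L : List (Bool × Bool)} (h : FreeGroup.reduce L = L)
    {x b tl} (hL : L = (x, b) :: tl) : tl.head? ≠ some (x, !b) := by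
  intro hhd
  match tl, hhd with
  | (y :: tl₂), hhd =>
    simp only [List.head?_cons, Option.some_inj] at hhd
    subst hhd
    have hstep : FreeGroup.Red.Step L tl₂ := by
      rw [hL]; exact FreeGroup.Red.Step.cons_not
    have h2 : FreeGroup.reduce L = FreeGroup.reduce tl₂ := FreeGroup.reduce.Step.eq hstep
    have h3 : L = FreeGroup.reduce tl₂ := by rw [← h, h2]
    have h4 : (FreeGroup.reduce tl₂).length ≤ tl₂.length :=
      FreeGroup.Red.length_le (FreeGroup.reduce.red)
    have h5 : L.length = tl₂.length + 2 := by rw [hL]; simp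
    rw [← h3] at h4
    omega

private lemma head_lemma (i : Bool) (w : FreeGroup Bool) :
    ((FreeGroup.of i)⁻¹ * w).toWord.head? = some (i, false) ↔
      ¬ (w.toWord.head? = some (i, true)) := by
  have hred : FreeGroup.reduce w.toWord = w.toWord := FreeGroup.reduce_toWord w
  have hw : (FreeGroup.of i)⁻¹ * w = FreeGroup.mk ((i, false) :: w.toWord) := by
    conv_lhs => rw [← FreeGroup.mk_toWord (x := w)]
    have h1 : (FreeGroup.of i)⁻¹ = FreeGroup.mk [(i, false)] := by
      rw [show FreeGroup.of i = FreeGroup.mk [(i, true)] from rfl, FreeGroup.inv_mk]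
      rfl
    rw [h1, FreeGroup.mul_mk]
    rfl
  rw [hw, FreeGroup.toWord_mk, FreeGroup.reduce.cons, hred]
  rcases hL : w.toWord with _ | ⟨⟨a, b⟩, tl⟩
  · simp
  · show (if (i, false).1 = a ∧ (i, false).2 = !b then tl
        else (i,false) :: (a,b) :: tl).head? = some (i, false) ↔ _
    by_cases hc : (i, false).1 = a ∧ (i, false).2 = !b
    · rw [if_pos hc]
      obtain ⟨hc1, hc2⟩ := hc
      simp only at hc1 hc2
      have hb : b = true := by
        cases b
        · simp at hc2
        · rfl
      subst hb; subst hc1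
      have hthis := reduced_no_cancel hred hL
      simp only [Bool.not_true] at hthis
      simpa using hthis
    · rw [if_neg hc]
      have hne : ((a, b) : Bool × Bool) ≠ (i, true) := by
        intro hcon
        injection hcon with h1 h2
        subst h1; subst h2
        exact hc ⟨rfl, by simp⟩
      simp [hne]

private theorem not_amenable_freeGroup_aux
    (m : (FreeGroup Bool → ℝ) → ℝ)
    (hadd : ∀ f₁ f₂ : FreeGroup Bool → ℝ, IsBounded (range f₁) → IsBounded (range f₂) →
      m (f₁ + f₂) = m f₁ + m f₂)
    (hpos : ∀ f : FreeGroup Bool → ℝ, IsBounded (range f) → (∀ x, 0 ≤ f x) → 0 ≤ m f)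
    (hone : m (fun _ => 1) = 1)
    (hinv : ∀ (g : FreeGroup Bool) (f : FreeGroup Bool → ℝ), IsBounded (range f) →
      m (fun x => f (g * x)) = m f) : False := by
  classical
  set χ : Set (FreeGroup Bool) → (FreeGroup Bool → ℝ) :=
    fun S => S.indicator (fun _ => 1) with hχ
  have hb : ∀ S, IsBounded (range (χ S)) := by
    intro S
    rw [isBounded_iff_forall_norm_le]
    refine ⟨1, ?_⟩
    rintro x ⟨w, rfl⟩
    by_cases h : w ∈ S <;> simp [hχ, Set.indicator_of_mem, Set.indicator_of_notMem, h]
  set μ : Set (FreeGroup Bool) → ℝ := fun S => m (χ S) with hμ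
  have hμadd : ∀ S T, Disjoint S T → μ (S ∪ T) = μ S + μ T := by
    intro S T hST
    have h1 : χ (S ∪ T) = χ S + χ T := Set.indicator_union_of_disjoint hST _
    rw [hμ]; dsimp only; rw [h1]
    exact hadd _ _ (hb S) (hb T)
  have hμpos : ∀ S, 0 ≤ μ S := fun S =>
    hpos _ (hb S) (fun x => Set.indicator_nonneg (fun _ _ => zero_le_one) x)
  have hμuniv : μ univ = 1 := by
    rw [hμ]; dsimp only
    rw [show χ univ = fun _ => (1:ℝ) from by funext x; simp [hχ]]
    exact hone
  have hμmono : ∀ S T, S ⊆ T → μ S ≤ μ T := by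
    intro S T h
    have hT : T = S ∪ (T \ S) := by rw [Set.union_diff_cancel h]
    rw [hT, hμadd _ _ disjoint_sdiff_right]
    linarith [hμpos (T \ S)]
  have hμsmul : ∀ (g : FreeGroup Bool) (S), μ (g • S) = μ S := by
    intro g S
    have h1 : χ (g • S) = fun x => χ S (g⁻¹ * x) := by
      funext x
      by_cases h : x ∈ g • S
      · have h' : g⁻¹ * x ∈ S := by
          rw [← smul_eq_mul]
          exact Set.mem_smul_set_iff_inv_smul_mem.mp h
        simp [hχ, Set.indicator_of_mem, h, h']
      · have h' : g⁻¹ * x ∉ S := by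
          rw [← smul_eq_mul]
          exact fun hc => h (Set.mem_smul_set_iff_inv_smul_mem.mpr hc)
        simp [hχ, Set.indicator_of_notMem, h, h']
    rw [hμ]; dsimp only; rw [h1]
    exact hinv g⁻¹ (χ S) (hb S)
  set A : Bool × Bool → Set (FreeGroup Bool) := fun x => {w | w.toWord.head? = some x} with hA
  have hpart : ∀ i : Bool, μ (A (i, true)) + μ (A (i, false)) = 1 := by
    intro i
    have hcover : A (i, true) ∪ (FreeGroup.of i) • A (i, false) = univ := by
      ext w
      simp only [Set.mem_union, Set.mem_univ, iff_true]
      by_cases h : w.toWord.head? = some (i, true)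
      · exact Or.inl h
      · right
        rw [Set.mem_smul_set_iff_inv_smul_mem, smul_eq_mul]
        exact (head_lemma i w).mpr h
    have hdisj : Disjoint (A (i, true)) ((FreeGroup.of i) • A (i, false)) := by
      rw [Set.disjoint_left]
      intro w hw hw'
      rw [Set.mem_smul_set_iff_inv_smul_mem, smul_eq_mul] at hw'
      exact ((head_lemma i w).mp hw') hw
    have h2 := hμadd _ _ hdisj
    rw [hcover, hμuniv, hμsmul] at h2
    linarith
  have hdisjA : ∀ x y, x ≠ y → Disjoint (A x) (A y) := by
    intro x y hxy
    rw [Set.disjoint_left]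
    intro w h1 h2
    rw [hA] at h1 h2
    simp only [Set.mem_setOf_eq] at h1 h2
    rw [h1] at h2
    exact hxy (Option.some_inj.mp h2)
  have hd1 : Disjoint (A (false, true)) (A (false, false)) := hdisjA _ _ (by simp)
  have hd2 : Disjoint (A (true, true)) (A (true, false)) := hdisjA _ _ (by simp)
  have hd3 : Disjoint (A (false, true) ∪ A (false, false)) (A (true, true) ∪ A (true, false)) := by
    apply Disjoint.union_left <;> apply Disjoint.union_right <;> exact hdisjA _ _ (by simp)
  have h4 : μ (A (false, true) ∪ A (false, false) ∪ (A (true, true) ∪ A (true, false))) = 2 := by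
    rw [hμadd _ _ hd3, hμadd _ _ hd1, hμadd _ _ hd2]
    have := hpart false
    have := hpart true
    linarith
  have h5 := hμmono (A (false, true) ∪ A (false, false) ∪ (A (true, true) ∪ A (true, false)))
    univ (Set.subset_univ _)
  rw [hμuniv, h4] at h5
  linarith

universe u

private def PPF (K' : Type u) : Bool → Type u :=
  fun b => bif b then ULift.{u} (Multiplicative ℤ) else K'

private instance {K' : Type u} [Group K'] (b : Bool) : Group (PPF K' b) := by
  cases b
  · exact inferInstanceAs (Group K')
  · exact inferInstanceAs (Group (ULift (Multiplicative ℤ)))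

private theorem freeGroup_pair_lift_injective {G : Type u} [Group G] (K : Subgroup G)
    (h₀ : K) (hfin : ¬ IsOfFinOrder h₀) (g : G)
    (hinj : Function.Injective
      (Monoid.Coprod.lift K.subtype (zpowersHom G g) :
        Monoid.Coprod K (Multiplicative ℤ) →* G)) :
    Function.Injective
      (FreeGroup.lift (fun b : Bool => bif b then g else (h₀ : G)) : FreeGroup Bool →* G) := by
  classical
  have hh₀ : (h₀ : ↥K) ≠ 1 := by
    intro h; exact hfin (h ▸ IsOfFinOrder.one)
  have hzpow : ∀ n : ℤ, n ≠ 0 → h₀ ^ n ≠ 1 := by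
    intro n hn h
    exact hn ((injective_zpow_iff_not_isOfFinOrder.mpr hfin)
      (by simpa using h : h₀ ^ n = h₀ ^ (0:ℤ)))
  -- the two factor maps from FreeGroup Unit
  set σ : FreeGroup Unit →* ↥K := FreeGroup.lift (fun _ => h₀) with hσdef
  set τ : FreeGroup Unit →* ULift.{u} (Multiplicative ℤ) :=
    FreeGroup.lift (fun _ => ULift.up (Multiplicative.ofAdd 1)) with hτdef
  have hσ : ∀ u : FreeGroup Unit, u ≠ 1 → σ u ≠ 1 := by
    rw [FreeGroup.freeGroupUnitEquivInt.forall_congr_left]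
    intro n hn
    change σ (FreeGroup.of () ^ n) ≠ 1
    have hn0 : n ≠ 0 := by
      rintro rfl
      apply hn
      simp [FreeGroup.freeGroupUnitEquivInt]
    rw [map_zpow]
    simpa [hσdef] using hzpow n hn0
  have hτ : ∀ u : FreeGroup Unit, u ≠ 1 → τ u ≠ 1 := by
    rw [FreeGroup.freeGroupUnitEquivInt.forall_congr_left]
    intro n hn
    change τ (FreeGroup.of () ^ n) ≠ 1
    have hn0 : n ≠ 0 := by
      rintro rfl
      apply hn
      simp [FreeGroup.freeGroupUnitEquivInt]
    rw [map_zpow]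
    simp only [hτdef, FreeGroup.lift_apply_of]
    intro h
    apply hn0
    have h2 : Multiplicative.toAdd ((ULift.up (Multiplicative.ofAdd (1:ℤ)) : ULift (Multiplicative ℤ)) ^ n).down
        = Multiplicative.toAdd (1 : ULift (Multiplicative ℤ)).down := by
      rw [h]
    simpa using h2
  -- the ambient free product over Bool
  set E₁ : Monoid.Coprod ↥K (Multiplicative ℤ) →* Monoid.CoprodI (PPF ↥K) :=
    Monoid.Coprod.lift
      (Monoid.CoprodI.of (M := PPF ↥K) (i := false))
      ((Monoid.CoprodI.of (M := PPF ↥K) (i := true)).comp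
        (MulEquiv.ulift (α := Multiplicative ℤ)).symm.toMonoidHom) with hE₁
  letI : MulAction (Monoid.Coprod ↥K (Multiplicative ℤ)) (Monoid.CoprodI.Word (PPF ↥K)) :=
    MulAction.compHom _ E₁
  set f : ∀ _ : Bool, FreeGroup Unit →* Monoid.Coprod ↥K (Multiplicative ℤ) :=
    fun b => bif b then (Monoid.Coprod.inr (M := ↥K)).comp
        ((MulEquiv.ulift (α := Multiplicative ℤ)).toMonoidHom.comp τ)
      else (Monoid.Coprod.inl (N := Multiplicative ℤ)).comp σ with hf
  have hmain : Function.Injective (Monoid.CoprodI.lift f) := by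
    apply Monoid.CoprodI.lift_injective_of_ping_pong f
      (Or.inr ⟨false, ?_⟩)
      (fun b => {w : Monoid.CoprodI.Word (PPF ↥K) | w.fstIdx = some b}) ?_ ?_ ?_
    · -- cardinality
      have h3 : (3 : Cardinal) ≤ Cardinal.aleph0 := (Cardinal.nat_lt_aleph0 3).le
      exact h3.trans (Cardinal.aleph0_le_mk (FreeGroup Unit))
    · -- nonempty
      intro b
      cases b
      · refine ⟨⟨[⟨false, h₀⟩], ?_, ?_⟩, rfl⟩
        · intro l hl
          simp only [List.mem_singleton] at hl
          subst hl
          exact hh₀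
        · exact List.isChain_singleton _
      · refine ⟨⟨[⟨true, ULift.up (Multiplicative.ofAdd 1)⟩], ?_, ?_⟩, rfl⟩
        · intro l hl
          simp only [List.mem_singleton] at hl
          subst hl
          intro h
          have h2 := congrArg (fun x : PPF ↥K true => Multiplicative.toAdd (ULift.down x)) h
          simp at h2
          exact one_ne_zero h2
        · exact List.isChain_singleton _
    · -- disjoint
      intro i j hij
      simp only [Function.onFun]
      rw [Set.disjoint_left]
      intro w hw hw'
      simp only [Set.mem_setOf_eq] at hw hw'
      rw [hw] at hw'
      exact hij (Option.some_inj.mp hw')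
    · -- ping pong
      intro i j hij u hu
      intro w hw
      obtain ⟨w', hw', rfl⟩ := hw
      simp only [Set.mem_setOf_eq] at hw' ⊢
      have hne : w'.fstIdx ≠ some i := by
        rw [hw']
        intro h
        exact hij (Option.some_inj.mp h).symm
      show (E₁ (f i u) • w').fstIdx = some i
      cases i
      · have hE : E₁ (f false u) = Monoid.CoprodI.of (M := PPF ↥K) (i := false) (σ u) := by
          simp [hf, hE₁, Monoid.Coprod.lift_apply_inl]
          rfl
        rw [hE]
        have h1 := Monoid.CoprodI.Word.fstIdx_cons (M := PPF ↥K) (i := false) (σ u) w' hne (hσ u hu)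
        convert h1 using 2
        exact Monoid.CoprodI.Word.cons_eq_smul.symm
      · have hE : E₁ (f true u) = Monoid.CoprodI.of (M := PPF ↥K) (i := true) (τ u) := by
          simp only [hf, hE₁, cond_true, MonoidHom.coe_comp, Function.comp_apply,
            Monoid.Coprod.lift_apply_inr]
          rfl
        rw [hE]
        have h1 := Monoid.CoprodI.Word.fstIdx_cons (M := PPF ↥K) (i := true) (τ u) w' hne (hτ u hu)
        convert h1 using 2
        exact Monoid.CoprodI.Word.cons_eq_smul.symm
  -- assemble
  have hcomp : (Monoid.Coprod.lift K.subtype (zpowersHom G g)).comp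
      ((Monoid.CoprodI.lift f).comp (freeGroupEquivCoprodI (ι := Bool)).toMonoidHom)
      = FreeGroup.lift (fun b : Bool => bif b then g else (h₀ : G)) := by
    ext b
    cases b <;>
      simp [freeGroupEquivCoprodI, hf, hσdef, hτdef, Monoid.Coprod.lift_apply_inl,
        Monoid.Coprod.lift_apply_inr, zpowersHom_apply, MulEquiv.ulift, Equiv.ulift]
  rw [← hcomp]
  simp only [MonoidHom.coe_comp]
  exact hinj.comp (hmain.comp (MulEquiv.injective _))

theorem not_isAmenable_freeGroup : ¬ IsAmenable (FreeGroup Bool) := by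
  rintro ⟨m, hadd, hsmul, hpos, hone, hinv⟩
  exact not_amenable_freeGroup_aux m hadd hpos hone hinv

theorem maximal_amenable_of_free_from_complement (G : Type*) [Group G]
    (hG : Monoid.IsTorsionFree G) (K : Subgroup G) (hKnt : K ≠ ⊥)
    (H : Subgroup K) (hH : MaximalAmenable H)
    (hfree : ∀ g : G, g ∉ K →
      Function.Injective
        (Monoid.Coprod.lift K.subtype (zpowersHom G g) :
          Monoid.Coprod K (Multiplicative ℤ) →* G)) :
    MaximalAmenable (H.map K.subtype) := by
  classical
  constructor
  · exact isAmenable_of_injective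
      (Subgroup.equivMapOfInjective H K.subtype K.subtype_injective).symm.toMonoidHom
      (MulEquiv.injective _) hH.1
  · intro L hL hHL
    have hKt : Monoid.IsTorsionFree ↥K := fun x hx hfin =>
        hG (x : G) (by simpa using hx) (K.subtype.isOfFinOrder hfin)
    -- there is a nontrivial element of H
    have hex : ∃ h₀ : ↥K, h₀ ∈ H ∧ h₀ ≠ 1 := by
      by_contra hcon
      push_neg at hcon
      obtain ⟨k, hk⟩ := Subgroup.ne_bot_iff_exists_ne_one.mp hKnt
      have hkfin : ¬ IsOfFinOrder (k : ↥K) := hKt k hk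
      have hzinj : Function.Injective (zpowersHom ↥K (k : ↥K)) := by
        intro x y hxy
        have h1 : (k : ↥K) ^ (Multiplicative.toAdd x) = (k : ↥K) ^ (Multiplicative.toAdd y) := hxy
        have h2 := (injective_zpow_iff_not_isOfFinOrder.mpr hkfin) h1
        exact Multiplicative.toAdd.injective h2
      have hamen : IsAmenable ↥(zpowersHom ↥K (k : ↥K)).range :=
        isAmenable_of_injective (MonoidHom.ofInjective hzinj).symm.toMonoidHom
          (MulEquiv.injective _) isAmenable_multiplicative_int
      have hle : H ≤ (zpowersHom ↥K (k : ↥K)).range := by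
        intro x hx
        rw [hcon x hx]
        exact one_mem _
      have heq := hH.2 _ hamen hle
      have hkH : (k : ↥K) ∈ H := by
        rw [← heq]
        exact ⟨Multiplicative.ofAdd 1, by simp [zpowersHom_apply]⟩
      exact hk (hcon _ hkH)
    obtain ⟨h₀, hh₀H, hh₀⟩ := hex
    have hh₀L : ((h₀ : ↥K) : G) ∈ L := hHL (Subgroup.mem_map_of_mem K.subtype hh₀H)
    -- L is contained in K
    have hLK : ∀ x ∈ L, x ∈ K := by
      intro x hxL
      by_contra hxK
      have hfin : ¬ IsOfFinOrder h₀ := hKt h₀ hh₀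
      have hψ := freeGroup_pair_lift_injective K h₀ hfin x (hfree x hxK)
      have hmem : ∀ b : Bool, (bif b then x else ((h₀ : ↥K) : G)) ∈ L := by
        intro b
        cases b
        · exact hh₀L
        · exact hxL
      set ψ' : FreeGroup Bool →* ↥L :=
        FreeGroup.lift (fun b => (⟨bif b then x else ((h₀ : ↥K) : G), hmem b⟩ : ↥L)) with hψ'
      have hfact : (L.subtype).comp ψ'
          = FreeGroup.lift (fun b : Bool => bif b then x else ((h₀ : ↥K) : G)) := by
        ext b
        cases b <;> simp [hψ']
      have hψ'inj : Function.Injective ψ' := by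
        intro u v huv
        apply hψ
        have h1 : (L.subtype.comp ψ') u = (L.subtype.comp ψ') v := by
          simp [MonoidHom.comp_apply, huv]
        rwa [hfact] at h1
      exact not_isAmenable_freeGroup (isAmenable_of_injective ψ' hψ'inj hL)
    -- conclude using maximality in K
    have hcomap : Subgroup.comap K.subtype L = H := by
      apply hH.2
      · refine isAmenable_of_injective
          (MonoidHom.mk' (fun x : ↥(Subgroup.comap K.subtype L) =>
            (⟨K.subtype x.1, x.2⟩ : ↥L)) (fun a b => rfl)) ?_ hL
        intro a b hab
        rw [Subtype.mk.injEq] at hab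
        exact Subtype.ext (K.subtype_injective hab)
      · intro x hx
        exact hHL (Subgroup.mem_map_of_mem K.subtype hx)
    apply le_antisymm
    · intro x hxL
      have hxK : x ∈ K := hLK x hxL
      have h1 : (⟨x, hxK⟩ : ↥K) ∈ Subgroup.comap K.subtype L := hxL
      rw [hcomap] at h1
      exact ⟨⟨x, hxK⟩, h1, rfl⟩
    · exact hHL
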